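/- (Principal sl₂-triple) Let 𝔤 be a finite-dimensional split semisimple Lie algebra over a field K of characteristic 0, with splitting Cartan subalgebra 𝔥, root system Φ ⊂ 𝔥*, base Δ of simple roots, and positive roots Φ⁺; write 𝔤_β for the root space of β ∈ Φ. For each γ ∈ Φ let h_γ ∈ 𝔥 denote the coroot element, characterized by β(h_γ) = ⟨β, γ^∨⟩ for all β ∈ Φ, and assume {h_α : α ∈ Δ} is a basis of 𝔥. For each α ∈ Δ choose x_α ∈ 𝔤_α and y_α ∈ 𝔤_{−α} with [x_α, y_α] = h_α. Set H = Σ_{γ∈Φ⁺} h_γ, write H = Σ_{α∈Δ} c_α h_α with c_α ∈ K, set X = Σ_{α∈Δ} x_α and Y = Σ_{α∈Δ} c_α y_α. Then (H, X, Y) is an sl₂-triple in 𝔤: [H, X] = 2X, [H, Y] = −2Y, and [X, Y] = H. -/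

import Mathlib

lemma coeff_zero_aux {K M ι : Type*} [Field K] [AddCommGroup M] [Module K M]
    (v : ι → M) (Δ : Finset ι)
    (hli : LinearIndependent K (fun j : ↥(↑Δ : Set ι) => v j.1))
    (a : ι → K) (h : ∑ j ∈ Δ, a j • v j = 0) : ∀ j ∈ Δ, a j = 0 := by
  intro j hj
  have := Fintype.linearIndependent_iff.mp hli (fun i => a i.1) ?_ ⟨j, hj⟩
  · exact this
  · rw [← h, ← Finset.sum_coe_sort Δ (fun j => a j • v j)]
    rfl

lemma lie_sum_aux {L ι : Type*} [LieRing L] (z : L) (s : Finset ι) (f : ι → L) :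
    ⁅z, ∑ i ∈ s, f i⁆ = ∑ i ∈ s, ⁅z, f i⁆ := by
  induction s using Finset.cons_induction with
  | empty => simp
  | cons a s ha ih => simp [Finset.sum_cons, ih]

lemma sum_lie_aux {L ι : Type*} [LieRing L] (z : L) (s : Finset ι) (f : ι → L) :
    ⁅∑ i ∈ s, f i, z⁆ = ∑ i ∈ s, ⁅f i, z⁆ := by
  induction s using Finset.cons_induction with
  | empty => simp
  | cons a s ha ih => simp [Finset.sum_cons, ih]


set_option maxHeartbeats 1000000 in
/-- (Principal `sl₂`-triple.)  Let `𝔤` be a finite-dimensional split semisimple Lie algebra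
over a field `K` of characteristic zero, with splitting Cartan subalgebra `𝔥`, root system `P`
(realised as a root pairing between `𝔥*` and `𝔥` via the evaluation pairing, so that the coroot
element `h_γ = P.coroot γ ∈ 𝔥` is characterised by `β(h_γ) = ⟨β, γ^∨⟩` for all roots `β`),
base `Δ` and positive roots `pos`, and root spaces `rs β = {z : 𝔤 | ⁅h, z⁆ = β(h) • z ∀ h ∈ 𝔥}`,
so that `𝔤` decomposes as `𝔥` plus the root spaces and `rs μ = 0` whenever `μ ≠ 0` is not a
root.  Assume the coroots of the simple roots form a basis of `𝔥`.  For each `α ∈ Δ` choose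
`x α ∈ 𝔤_α` and `y α ∈ 𝔤_{-α}` with `⁅x α, y α⁆ = h_α`.  Set `H = ∑_{γ ∈ pos} h_γ`, write
`H = ∑_{α ∈ Δ} c_α • h_α`, and set `X = ∑_{α ∈ Δ} x α` and `Y = ∑_{α ∈ Δ} c_α • y α`.
Then `(H, X, Y)` is an `sl₂`-triple: `⁅H, X⁆ = 2X`, `⁅H, Y⁆ = -2Y` and `⁅X, Y⁆ = H`. -/
theorem principal_sl2_triple
    {K 𝔤 : Type*} [Field K] [CharZero K] [LieRing 𝔤] [LieAlgebra K 𝔤]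
    [FiniteDimensional K 𝔤] [LieAlgebra.IsSemisimple K 𝔤]
    (𝔥 : LieSubalgebra K 𝔤) [𝔥.IsCartanSubalgebra]
    {ι : Type*} [Fintype ι]
    (P : RootPairing ι K (Module.Dual K ↥𝔥) ↥𝔥)
    (hPeval : ∀ (β : Module.Dual K ↥𝔥) (h : ↥𝔥), P.toLinearMap β h = β h)
    (hspan : Submodule.span K (Set.range P.root) = ⊤)
    (hred : P.IsReduced)
    (Δ pos : Finset ι)
    (hli : LinearIndependent K (fun j : ↥(↑Δ : Set ι) => P.root j.1))
    (hdecomp : ∀ i : ι, (∃ c : ι → ℕ, P.root i = ∑ j ∈ Δ, (c j : K) • P.root j) ∨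
      (∃ c : ι → ℕ, P.root i = -∑ j ∈ Δ, (c j : K) • P.root j))
    (hposchar : ∀ i : ι, i ∈ pos ↔ ∃ c : ι → ℕ, P.root i = ∑ j ∈ Δ, (c j : K) • P.root j)
    (rs : Module.Dual K ↥𝔥 → Submodule K 𝔤)
    (hrs : ∀ (β : Module.Dual K ↥𝔥) (z : 𝔤),
      z ∈ rs β ↔ ∀ h : ↥𝔥, ⁅(h : 𝔤), z⁆ = β h • z)
    (hdec : 𝔥.toSubmodule ⊔ (⨆ i : ι, rs (P.root i)) = ⊤)
    (hvanish : ∀ μ : Module.Dual K ↥𝔥, μ ≠ 0 → (∀ i : ι, P.root i ≠ μ) → rs μ = ⊥)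
    (hbasisli : LinearIndependent K (fun j : ↥(↑Δ : Set ι) => P.coroot j.1))
    (hbasisspan : Submodule.span K (P.coroot '' (↑Δ : Set ι)) = ⊤)
    (x y : ι → 𝔤)
    (hx : ∀ α ∈ Δ, x α ∈ rs (P.root α))
    (hy : ∀ α ∈ Δ, y α ∈ rs (-P.root α))
    (hxy : ∀ α ∈ Δ, ⁅x α, y α⁆ = ((P.coroot α : ↥𝔥) : 𝔤))
    (H : ↥𝔥) (hH : H = ∑ γ ∈ pos, P.coroot γ)
    (c : ι → K) (hc : H = ∑ α ∈ Δ, c α • P.coroot α)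
    (X Y : 𝔤) (hX : X = ∑ α ∈ Δ, x α) (hY : Y = ∑ α ∈ Δ, c α • y α) :
    ⁅(H : 𝔤), X⁆ = (2 : K) • X ∧ ⁅(H : 𝔤), Y⁆ = -((2 : K) • Y) ∧ ⁅X, Y⁆ = (H : 𝔤) := by
  classical
  have hcz : ∀ a : ι → K, (∑ j ∈ Δ, a j • P.root j = 0) → ∀ j ∈ Δ, a j = 0 :=
    coeff_zero_aux _ Δ hli
  -- roots are nonzero
  have hroot0 : ∀ i : ι, P.root i ≠ 0 := by
    intro i h
    have h2 : (0 : K) = 2 := by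
      rw [← P.root_coroot_two i, h, map_zero, LinearMap.zero_apply]
    exact two_ne_zero h2.symm
  -- a positive root is never the negative of a simple root
  have hnotneg : ∀ γ ∈ pos, ∀ α ∈ Δ, P.root γ ≠ -P.root α := by
    intro γ hγ α hα hcontra
    obtain ⟨n, hn⟩ := (hposchar γ).mp hγ
    have h0 : ∑ j ∈ Δ, ((n j : K) + (if j = α then 1 else 0)) • P.root j = 0 := by
      simp only [add_smul, ite_smul, one_smul, zero_smul]
      rw [Finset.sum_add_distrib, Finset.sum_ite_eq' Δ α, if_pos hα, ← hn, hcontra]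
      abel
    have := hcz _ h0 α hα
    rw [if_pos rfl] at this
    have : ((n α + 1 : ℕ) : K) = 0 := by push_cast; linear_combination this
    exact Nat.cast_ne_zero.mpr (Nat.succ_ne_zero _) this
  -- differences of distinct simple roots are not roots
  have hnotroot : ∀ α ∈ Δ, ∀ β ∈ Δ, α ≠ β → ∀ i : ι,
      P.root i ≠ P.root α - P.root β := by
    intro α hα β hβ hne i hi
    rcases hdecomp i with ⟨n, hn⟩ | ⟨n, hn⟩
    · have h0 : ∑ j ∈ Δ, ((n j : K) + (if j = β then 1 else 0)
          - (if j = α then 1 else 0)) • P.root j = 0 := by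
        rw [Finset.sum_congr rfl (fun j _ => by module :
          ∀ j ∈ Δ, ((n j : K) + (if j = β then 1 else 0)
              - (if j = α then 1 else 0)) • P.root j
            = ((n j : K) • P.root j + (if j = β then (1:K) else 0) • P.root j)
              - (if j = α then (1:K) else 0) • P.root j)]
        simp only [ite_smul, one_smul, zero_smul]
        rw [Finset.sum_sub_distrib, Finset.sum_add_distrib,
          Finset.sum_ite_eq' Δ β, Finset.sum_ite_eq' Δ α, if_pos hα, if_pos hβ, ← hn, hi]
        abel
      have := hcz _ h0 β hβ
      rw [if_pos rfl, if_neg (Ne.symm hne)] at this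
      have : ((n β + 1 : ℕ) : K) = 0 := by push_cast; linear_combination this
      exact Nat.cast_ne_zero.mpr (Nat.succ_ne_zero _) this
    · have h0 : ∑ j ∈ Δ, ((n j : K) + (if j = α then 1 else 0)
          - (if j = β then 1 else 0)) • P.root j = 0 := by
        rw [Finset.sum_congr rfl (fun j _ => by module :
          ∀ j ∈ Δ, ((n j : K) + (if j = α then 1 else 0)
              - (if j = β then 1 else 0)) • P.root j
            = ((n j : K) • P.root j + (if j = α then (1:K) else 0) • P.root j)
              - (if j = β then (1:K) else 0) • P.root j)]
        simp only [ite_smul, one_smul, zero_smul]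
        rw [Finset.sum_sub_distrib, Finset.sum_add_distrib,
          Finset.sum_ite_eq' Δ α, Finset.sum_ite_eq' Δ β, if_pos hα, if_pos hβ]
        have hn' : ∑ j ∈ Δ, (n j : K) • P.root j = -P.root i := by
          rw [hn]; abel
        rw [hn', hi]; abel
      have := hcz _ h0 α hα
      rw [if_pos rfl, if_neg hne] at this
      have : ((n α + 1 : ℕ) : K) = 0 := by push_cast; linear_combination this
      exact Nat.cast_ne_zero.mpr (Nat.succ_ne_zero _) this
  -- simple roots are positive
  have hΔpos : ∀ α ∈ Δ, α ∈ pos := by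
    intro α hα
    refine (hposchar α).mpr ⟨fun j => if j = α then 1 else 0, ?_⟩
    simp only [apply_ite (Nat.cast : ℕ → K), Nat.cast_one, Nat.cast_zero, ite_smul,
      one_smul, zero_smul, Finset.sum_ite_eq' Δ α, if_pos hα]
  -- reflection in a simple root permutes the other positive roots
  have hCpos : ∀ α ∈ Δ, ∀ γ ∈ pos, γ ≠ α →
      P.reflectionPerm α γ ∈ pos ∧ P.reflectionPerm α γ ≠ α := by
    intro α hα γ hγ hγα
    obtain ⟨n, hn⟩ := (hposchar γ).mp hγ
    have hσroot : P.root (P.reflectionPerm α γ)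
        = P.root γ - P.pairing γ α • P.root α := by
      rw [← P.reflectionPerm_root α γ, P.root_coroot_eq_pairing]
    have hσα : P.reflectionPerm α γ ≠ α := by
      intro h
      have hγeq : γ = P.reflectionPerm α α := by
        have := congrArg (P.reflectionPerm α) h
        rw [P.reflectionPerm_self] at this
        exact this
      have : P.root γ = -P.root α := by
        rw [hγeq, ← P.reflectionPerm_root α α, P.root_coroot_eq_pairing, P.pairing_same]
        module
      exact hnotneg γ hγ α hα this
    refine ⟨?_, hσα⟩
    rcases hdecomp (P.reflectionPerm α γ) with ⟨m, hm⟩ | ⟨m, hm⟩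
    · exact (hposchar _).mpr ⟨m, hm⟩
    · exfalso
      have h0 : ∑ j ∈ Δ, ((n j : K) + (m j : K)
          - (if j = α then P.pairing γ α else 0)) • P.root j = 0 := by
        rw [Finset.sum_congr rfl (fun j _ => by module :
          ∀ j ∈ Δ, ((n j : K) + (m j : K)
              - (if j = α then P.pairing γ α else 0)) • P.root j
            = ((n j : K) • P.root j + (m j : K) • P.root j)
              - (if j = α then P.pairing γ α else 0) • P.root j)]
        simp only [ite_smul, zero_smul]
        rw [Finset.sum_sub_distrib, Finset.sum_add_distrib,
          Finset.sum_ite_eq' Δ α, if_pos hα, ← hn]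
        have hm' : ∑ j ∈ Δ, (m j : K) • P.root j = -P.root (P.reflectionPerm α γ) := by
          rw [hm]; abel
        rw [hm', hσroot]; abel
      have hnj : ∀ j ∈ Δ, j ≠ α → n j = 0 := by
        intro j hj hjα
        have := hcz _ h0 j hj
        rw [if_neg hjα] at this
        have : ((n j + m j : ℕ) : K) = 0 := by push_cast; linear_combination this
        have := Nat.cast_injective (R := K) (this.trans (Nat.cast_zero).symm)
        omega
      have hγα' : P.root γ = (n α : K) • P.root α := by
        rw [hn, Finset.sum_eq_single_of_mem α hα]
        intro j hj hjα
        rw [hnj j hj hjα, Nat.cast_zero, zero_smul]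
      have hdep : ¬ LinearIndependent K ![P.root γ, P.root α] := by
        intro hLI
        have := (LinearIndependent.pair_iff.mp hLI 1 (-(n α : K))
          (by rw [hγα']; module)).1
        exact one_ne_zero this
      rcases hred.eq_or_eq_neg γ α hdep with h | h
      · exact hγα (P.root.injective h)
      · exact hnotneg γ hγ α hα h
  -- key: each simple root evaluates to 2 on H
  have hD : ∀ α ∈ Δ, P.root α H = 2 := by
    intro α hα
    have hsum : P.root α H = ∑ γ ∈ pos, P.pairing α γ := by
      rw [hH, map_sum]
      exact Finset.sum_congr rfl fun γ _ => by
        rw [← hPeval, P.root_coroot_eq_pairing]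
    have hαpos := hΔpos α hα
    rw [hsum, ← Finset.add_sum_erase _ _ hαpos, P.pairing_same]
    have hT : ∑ γ ∈ pos.erase α, P.pairing α γ
        = ∑ γ ∈ pos.erase α, -P.pairing α γ := by
      refine Finset.sum_equiv (P.reflectionPerm α) (fun γ => ?_) (fun γ hγ => ?_)
      · constructor
        · intro hγ
          rw [Finset.mem_erase] at hγ ⊢
          obtain ⟨h1, h2⟩ := hCpos α hα γ hγ.2 hγ.1
          exact ⟨h2, h1⟩
        · intro hγ
          rw [Finset.mem_erase] at hγ ⊢
          obtain ⟨h1, h2⟩ := hCpos α hα _ hγ.2 hγ.1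
          rw [P.reflectionPerm_self] at h1 h2
          exact ⟨h2, h1⟩
      · rw [P.pairing_reflectionPerm, P.pairing_reflectionPerm_self_left, neg_neg]
    have hT0 : ∑ γ ∈ pos.erase α, P.pairing α γ = 0 := by
      rw [Finset.sum_neg_distrib] at hT
      linear_combination hT / 2
    rw [hT0, add_zero]
  -- bracket of root vectors lies in the sum root space
  have hbr : ∀ (μ ν : Module.Dual K ↥𝔥) (u v : 𝔤), u ∈ rs μ → v ∈ rs ν →
      ⁅u, v⁆ ∈ rs (μ + ν) := by
    intro μ ν u v hu hv
    rw [hrs] at hu hv ⊢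
    intro h
    rw [leibniz_lie, hu h, hv h, lie_smul, smul_lie, LinearMap.add_apply, add_smul]
  -- off-diagonal brackets vanish
  have hzero : ∀ α ∈ Δ, ∀ β ∈ Δ, α ≠ β → ⁅x α, y β⁆ = 0 := by
    intro α hα β hβ hne
    have hmem := hbr _ _ _ _ (hx α hα) (hy β hβ)
    have hbot : rs (P.root α + -P.root β) = ⊥ := by
      apply hvanish
      · intro h
        apply hne
        apply P.root.injective
        have : P.root α = P.root β := by linear_combination (norm := module) h
        exact this
      · intro i hi
        exact hnotroot α hα β hβ hne i (by rw [hi]; abel)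
    rw [hbot] at hmem
    simpa using hmem
  refine ⟨?_, ?_, ?_⟩
  · -- ⁅H, X⁆ = 2 • X
    rw [hX, lie_sum_aux, Finset.smul_sum]
    refine Finset.sum_congr rfl fun α hα => ?_
    rw [(hrs _ _).mp (hx α hα) H, hD α hα]
  · -- ⁅H, Y⁆ = -(2 • Y)
    rw [hY, lie_sum_aux, Finset.smul_sum, ← Finset.sum_neg_distrib]
    refine Finset.sum_congr rfl fun α hα => ?_
    rw [lie_smul, (hrs _ _).mp (hy α hα) H]
    have : (-P.root α) H = -2 := by
      rw [LinearMap.neg_apply, hD α hα]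
    rw [this]
    module
  · -- ⁅X, Y⁆ = H
    rw [hX, hY, sum_lie_aux]
    have hinner : ∀ α ∈ Δ, ⁅x α, ∑ β ∈ Δ, c β • y β⁆ = c α • ((P.coroot α : ↥𝔥) : 𝔤) := by
      intro α hα
      rw [lie_sum_aux, Finset.sum_eq_single_of_mem α hα]
      · rw [lie_smul, hxy α hα]
      · intro β hβ hβα
        rw [lie_smul, hzero α hα β hβ (Ne.symm hβα), smul_zero]
    rw [Finset.sum_congr rfl hinner, hc]
    push_cast
    rfl
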